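/- Let s₁, s₂ > 0 and let c₁, c₂ ≥ 0 be real numbers. Define R₁(ρ) = ρ·log₂(1 + s₁/ρ) and R₂(ρ) = ρ·log₂(1 + s₂/ρ) for ρ ∈ (0,1), and F(ρ) = (R₁(ρ) − c₁)·(R₂(1 − ρ) − c₂). Suppose there exists ρ₀ ∈ (0, 1) with c₁ < R₁(ρ₀) and c₂ < R₂(1 − ρ₀). Then the set A = {ρ ∈ (0,1) : c₁ < R₁(ρ) and c₂ < R₂(1 − ρ)} is a nonempty open subinterval of (0,1), F is positive on A, and F attains its maximum over A at exactly one point ρ* ∈ A. -/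

import Mathlib

open Real Set

noncomputable def fdmPhi (s ρ : ℝ) : ℝ := ρ * Real.log (ρ + s) - ρ * Real.log ρ

noncomputable def fdmPhi' (s ρ : ℝ) : ℝ := Real.log (ρ + s) + ρ / (ρ + s) - Real.log ρ - 1

lemma fdmPhi_eq {s : ℝ} (hs : 0 < s) {ρ : ℝ} (hρ : 0 ≤ ρ) :
    ρ * Real.log (1 + s / ρ) = fdmPhi s ρ := by
  rcases eq_or_lt_of_le hρ with rfl | h
  · simp [fdmPhi]
  · have h1 : (1 : ℝ) + s / ρ = (ρ + s) / ρ := by field_simp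
    rw [h1, Real.log_div (by positivity) (ne_of_gt h), fdmPhi]; ring

lemma fdmPhi_zero (s : ℝ) : fdmPhi s 0 = 0 := by simp [fdmPhi]

lemma continuousOn_fdmPhi {s : ℝ} (hs : 0 < s) : ContinuousOn (fdmPhi s) (Set.Ici 0) := by
  apply ContinuousOn.sub
  · exact continuousOn_id.mul (ContinuousOn.log (by fun_prop)
      (fun x hx => by have : (0:ℝ) ≤ x := hx; positivity))
  · exact Real.continuous_mul_log.continuousOn

lemma hasDerivAt_fdmPhi {s : ℝ} (hs : 0 < s) {ρ : ℝ} (hρ : 0 < ρ) :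
    HasDerivAt (fdmPhi s) (fdmPhi' s ρ) ρ := by
  have hρs : (0:ℝ) < ρ + s := by positivity
  have h1 : HasDerivAt (fun x : ℝ => x + s) 1 ρ := (hasDerivAt_id ρ).add_const s
  have h2 : HasDerivAt (fun x : ℝ => Real.log (x + s)) ((ρ + s)⁻¹) ρ := by
    have := (Real.hasDerivAt_log hρs.ne').comp ρ h1
    rw [mul_one] at this
    exact this
  have h3 : HasDerivAt (fun x : ℝ => x * Real.log (x + s))
      (1 * Real.log (ρ + s) + ρ * (ρ + s)⁻¹) ρ := (hasDerivAt_id ρ).mul h2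
  have h4 : HasDerivAt (fun x : ℝ => x * Real.log x)
      (1 * Real.log ρ + ρ * ρ⁻¹) ρ := (hasDerivAt_id ρ).mul (Real.hasDerivAt_log hρ.ne')
  have := h3.sub h4
  refine this.congr_deriv ?_
  unfold fdmPhi'
  field_simp
  ring

lemma hasDerivAt_fdmPhi' {s : ℝ} (hs : 0 < s) {ρ : ℝ} (hρ : 0 < ρ) :
    HasDerivAt (fdmPhi' s) (-(s ^ 2 / (ρ * (ρ + s) ^ 2))) ρ := by
  have hρs : (0:ℝ) < ρ + s := by positivity
  have h1 : HasDerivAt (fun x : ℝ => x + s) 1 ρ := (hasDerivAt_id ρ).add_const s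
  have h2 : HasDerivAt (fun x : ℝ => Real.log (x + s)) ((ρ + s)⁻¹) ρ := by
    have := (Real.hasDerivAt_log hρs.ne').comp ρ h1
    rw [mul_one] at this
    exact this
  have h3 : HasDerivAt (fun x : ℝ => x / (x + s))
      ((1 * (ρ + s) - ρ * 1) / (ρ + s) ^ 2) ρ := (hasDerivAt_id ρ).div h1 hρs.ne'
  have h4 : HasDerivAt (fun x : ℝ => Real.log x) ρ⁻¹ ρ := Real.hasDerivAt_log hρ.ne'
  have := ((h2.add h3).sub h4).sub_const 1
  refine this.congr_deriv ?_
  field_simp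
  ring

lemma fdmPhi'_pos {s : ℝ} (hs : 0 < s) {ρ : ℝ} (hρ : 0 < ρ) : 0 < fdmPhi' s ρ := by
  have hρs : (0:ℝ) < ρ + s := by positivity
  have hlt : ρ / (ρ + s) < 1 := (div_lt_one hρs).2 (by linarith)
  have hkey : Real.log (ρ / (ρ + s)) < ρ / (ρ + s) - 1 :=
    Real.log_lt_sub_one_of_pos (by positivity) hlt.ne
  rw [Real.log_div hρ.ne' hρs.ne'] at hkey
  unfold fdmPhi'
  linarith

lemma strictMonoOn_fdmPhi {s : ℝ} (hs : 0 < s) : StrictMonoOn (fdmPhi s) (Set.Ici 0) := by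
  apply strictMonoOn_of_deriv_pos (convex_Ici 0) (continuousOn_fdmPhi hs)
  intro x hx
  rw [interior_Ici] at hx
  rw [(hasDerivAt_fdmPhi hs hx).deriv]
  exact fdmPhi'_pos hs hx

lemma strictConcaveOn_fdmPhi {s : ℝ} (hs : 0 < s) :
    StrictConcaveOn ℝ (Set.Ici 0) (fdmPhi s) := by
  apply strictConcaveOn_of_deriv2_neg (convex_Ici 0) (continuousOn_fdmPhi hs)
  intro x hx
  rw [interior_Ici] at hx
  have hev : deriv (fdmPhi s) =ᶠ[nhds x] fdmPhi' s := by
    filter_upwards [Ioi_mem_nhds hx] with y hy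
    exact (hasDerivAt_fdmPhi hs hy).deriv
  have h2 : deriv^[2] (fdmPhi s) x = deriv (fdmPhi' s) x := by
    simp only [Function.iterate_succ, Function.iterate_zero, Function.comp_apply, id_eq]
    exact Filter.EventuallyEq.deriv_eq hev
  rw [h2, (hasDerivAt_fdmPhi' hs hx).deriv]
  have hx' : (0:ℝ) < x := hx
  have : (0:ℝ) < s ^ 2 / (x * (x + s) ^ 2) := by positivity
  linarith

lemma fdm_amgm_contra {fy fρ fz gy gρ gz : ℝ}
    (hfy : 0 < fy) (hfρ : 0 < fρ) (hgy : 0 < gy) (hgρ : 0 < gρ)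
    (heqm : fy * gy = fρ * gρ)
    (hfmid : (fy + fρ) / 2 < fz) (hgmid : (gy + gρ) / 2 < gz)
    (hle : fz * gz ≤ fρ * gρ) : False := by
  have hstep : ((fy + fρ) / 2) * ((gy + gρ) / 2) < fz * gz :=
    mul_lt_mul'' hfmid hgmid (by positivity) (by positivity)
  have hsum : fy * gρ + fρ * gy < 2 * (fρ * gρ) := by nlinarith [hstep, hle, heqm]
  have hprod : (fy * gρ) * (fρ * gy) = (fρ * gρ) ^ 2 := by
    have h0 : fy * gρ * (fρ * gy) = (fy * gy) * (fρ * gρ) := by ring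
    rw [heqm] at h0
    rw [h0]; ring
  nlinarith [sq_nonneg (fy * gρ - fρ * gy), hprod, hsum,
    mul_pos hfy hgρ, mul_pos hfρ hgy, mul_pos hfρ hgρ]

set_option maxHeartbeats 1000000 in
/-- FDM instance of Theorem 1: with `R₁(ρ) = ρ log₂(1 + s₁/ρ)`,
`R₂(ρ) = ρ log₂(1 + s₂/ρ)` and Nash product
`F(ρ) = (R₁(ρ) - c₁)(R₂(1-ρ) - c₂)`, if some `ρ₀ ∈ (0,1)` strictly dominates
the disagreement rates, then `A = {ρ ∈ (0,1) : c₁ < R₁ ρ ∧ c₂ < R₂ (1-ρ)}` is a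
nonempty open subinterval of `(0,1)`, `F > 0` on `A`, and `F` attains its
maximum over `A` at exactly one point of `A`. -/
theorem fdm_nash_bargaining_exists_unique
    (s₁ s₂ c₁ c₂ : ℝ) (hs₁ : 0 < s₁) (hs₂ : 0 < s₂) (hc₁ : 0 ≤ c₁) (hc₂ : 0 ≤ c₂)
    (R₁ R₂ F : ℝ → ℝ)
    (hR₁ : ∀ ρ, R₁ ρ = ρ * Real.logb 2 (1 + s₁ / ρ))
    (hR₂ : ∀ ρ, R₂ ρ = ρ * Real.logb 2 (1 + s₂ / ρ))
    (hF : ∀ ρ, F ρ = (R₁ ρ - c₁) * (R₂ (1 - ρ) - c₂))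
    (A : Set ℝ)
    (hA : A = {ρ ∈ Set.Ioo (0 : ℝ) 1 | c₁ < R₁ ρ ∧ c₂ < R₂ (1 - ρ)})
    (ρ₀ : ℝ) (hρ₀ : ρ₀ ∈ Set.Ioo (0 : ℝ) 1)
    (hρ₀₁ : c₁ < R₁ ρ₀) (hρ₀₂ : c₂ < R₂ (1 - ρ₀)) :
    (∃ a b : ℝ, 0 ≤ a ∧ a < b ∧ b ≤ 1 ∧ A = Set.Ioo a b) ∧
    (∀ ρ ∈ A, 0 < F ρ) ∧
    (∃! ρstar : ℝ, ρstar ∈ A ∧ ∀ ρ ∈ A, F ρ ≤ F ρstar) := by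
  have hL0 : (0:ℝ) < Real.log 2 := Real.log_pos one_lt_two
  set L : ℝ := Real.log 2 with hLdef
  -- R in terms of fdmPhi
  have hR1phi : ∀ ρ : ℝ, 0 ≤ ρ → R₁ ρ = fdmPhi s₁ ρ / L := by
    intro ρ hρ
    rw [hR₁, Real.logb, ← fdmPhi_eq hs₁ hρ]; ring
  have hR2phi : ∀ ρ : ℝ, 0 ≤ ρ → R₂ ρ = fdmPhi s₂ ρ / L := by
    intro ρ hρ
    rw [hR₂, Real.logb, ← fdmPhi_eq hs₂ hρ]; ring
  -- membership characterization
  have hmem : ∀ x : ℝ, x ∈ A ↔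
      x ∈ Set.Ioo (0:ℝ) 1 ∧ c₁ * L < fdmPhi s₁ x ∧ c₂ * L < fdmPhi s₂ (1 - x) := by
    intro x
    rw [hA, Set.mem_sep_iff]
    constructor
    · rintro ⟨hx, h1, h2⟩
      rw [hR1phi x hx.1.le, lt_div_iff₀ hL0] at h1
      rw [hR2phi (1-x) (by linarith [hx.2]), lt_div_iff₀ hL0] at h2
      exact ⟨hx, h1, h2⟩
    · rintro ⟨hx, h1, h2⟩
      refine ⟨hx, ?_, ?_⟩
      · rw [hR1phi x hx.1.le, lt_div_iff₀ hL0]; exact h1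
      · rw [hR2phi (1-x) (by linarith [hx.2]), lt_div_iff₀ hL0]; exact h2
  have mono1 := strictMonoOn_fdmPhi hs₁
  have mono2 := strictMonoOn_fdmPhi hs₂
  have hρ₀A : ρ₀ ∈ A := by rw [hA]; exact ⟨hρ₀, hρ₀₁, hρ₀₂⟩
  -- order convexity
  have hconv : ∀ x ∈ A, ∀ y ∈ A, ∀ z : ℝ, x < z → z < y → z ∈ A := by
    intro x hx y hy z hxz hzy
    obtain ⟨hxI, hx1, hx2⟩ := (hmem x).1 hx
    obtain ⟨hyI, hy1, hy2⟩ := (hmem y).1 hy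
    have hzI : z ∈ Set.Ioo (0:ℝ) 1 := ⟨lt_trans hxI.1 hxz, lt_trans hzy hyI.2⟩
    refine (hmem z).2 ⟨hzI, ?_, ?_⟩
    · exact lt_trans hx1 (mono1 hxI.1.le (le_of_lt hzI.1) hxz)
    · exact lt_trans hy2 (mono2 (by simp; linarith [hyI.2] : (1-y:ℝ) ∈ Set.Ici 0)
        (by simp; linarith [hzI.2] : (1-z:ℝ) ∈ Set.Ici 0) (by linarith))
  -- openness
  have hopen : IsOpen A := by
    have hc1 : ContinuousOn (fun x => fdmPhi s₁ x) (Set.Ioo (0:ℝ) 1) :=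
      (continuousOn_fdmPhi hs₁).mono (fun x hx => le_of_lt hx.1)
    have hc2 : ContinuousOn (fun x => fdmPhi s₂ (1 - x)) (Set.Ioo (0:ℝ) 1) := by
      apply (continuousOn_fdmPhi hs₂).comp (by fun_prop)
      intro x hx
      simp only [Set.mem_Ici]
      linarith [hx.2]
    have e : A = (Set.Ioo (0:ℝ) 1 ∩ (fun x => fdmPhi s₁ x) ⁻¹' Set.Ioi (c₁ * L)) ∩
        (Set.Ioo (0:ℝ) 1 ∩ (fun x => fdmPhi s₂ (1 - x)) ⁻¹' Set.Ioi (c₂ * L)) := by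
      ext x
      rw [hmem]
      simp only [Set.mem_inter_iff, Set.mem_preimage, Set.mem_Ioi]
      tauto
    rw [e]
    exact (hc1.isOpen_inter_preimage isOpen_Ioo isOpen_Ioi).inter
      (hc2.isOpen_inter_preimage isOpen_Ioo isOpen_Ioi)
  have hAne : A.Nonempty := ⟨ρ₀, hρ₀A⟩
  have hbddb : BddBelow A := ⟨0, fun x hx => ((hmem x).1 hx).1.1.le⟩
  have hbdda : BddAbove A := ⟨1, fun x hx => ((hmem x).1 hx).1.2.le⟩
  have hInf_notin : sInf A ∉ A := by
    intro h
    obtain ⟨ε, hε, hball⟩ := Metric.isOpen_iff.1 hopen _ h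
    have hmem' : sInf A - ε/2 ∈ A := by
      apply hball
      simp only [Metric.mem_ball, Real.dist_eq]
      rw [show sInf A - ε/2 - sInf A = -(ε/2) by ring, abs_neg, abs_of_pos (by linarith)]
      linarith
    have := csInf_le hbddb hmem'
    linarith
  have hSup_notin : sSup A ∉ A := by
    intro h
    obtain ⟨ε, hε, hball⟩ := Metric.isOpen_iff.1 hopen _ h
    have hmem' : sSup A + ε/2 ∈ A := by
      apply hball
      simp only [Metric.mem_ball, Real.dist_eq]
      rw [show sSup A + ε/2 - sSup A = ε/2 by ring, abs_of_pos (by linarith)]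
      linarith
    have := le_csSup hbdda hmem'
    linarith
  have hAIoo : A = Set.Ioo (sInf A) (sSup A) := by
    ext z
    constructor
    · intro hz
      refine ⟨lt_of_le_of_ne (csInf_le hbddb hz) ?_, lt_of_le_of_ne (le_csSup hbdda hz) ?_⟩
      · intro h; exact hInf_notin (h ▸ hz)
      · intro h; exact hSup_notin (h ▸ hz)
    · rintro ⟨h1, h2⟩
      obtain ⟨x, hxA, hxz⟩ := exists_lt_of_csInf_lt hAne h1
      obtain ⟨y, hyA, hzy⟩ := exists_lt_of_lt_csSup hAne h2
      exact hconv x hxA y hyA z hxz hzy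
  have ha0 : (0:ℝ) ≤ sInf A := le_csInf hAne (fun x hx => ((hmem x).1 hx).1.1.le)
  have hb1 : sSup A ≤ 1 := csSup_le hAne (fun x hx => ((hmem x).1 hx).1.2.le)
  have hρ₀Ioo : ρ₀ ∈ Set.Ioo (sInf A) (sSup A) := hAIoo ▸ hρ₀A
  have hab : sInf A < sSup A := lt_trans hρ₀Ioo.1 hρ₀Ioo.2
  -- positivity of F on A
  have hFpos : ∀ ρ ∈ A, 0 < F ρ := by
    intro ρ hρ
    rw [hA] at hρ
    obtain ⟨hI, h1, h2⟩ := hρ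
    rw [hF]
    exact mul_pos (by linarith) (by linarith)
  refine ⟨⟨sInf A, sSup A, ha0, hab, hb1, hAIoo⟩, hFpos, ?_⟩
  -- continuity of F on Icc 0 1
  have hFcont : ContinuousOn F (Set.Icc (0:ℝ) 1) := by
    have hc1 : ContinuousOn (fun x => fdmPhi s₁ x / L - c₁) (Set.Icc (0:ℝ) 1) :=
      (((continuousOn_fdmPhi hs₁).mono (fun x hx => hx.1)).div_const L).sub continuousOn_const
    have hc2 : ContinuousOn (fun x => fdmPhi s₂ (1 - x) / L - c₂) (Set.Icc (0:ℝ) 1) := by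
      refine ContinuousOn.sub (ContinuousOn.div_const ?_ L) continuousOn_const
      apply (continuousOn_fdmPhi hs₂).comp (by fun_prop)
      intro x hx
      simp only [Set.mem_Ici]
      linarith [hx.2]
    apply ContinuousOn.congr (hc1.mul hc2)
    intro x hx
    rw [hF, hR1phi x hx.1, hR2phi (1-x) (by linarith [hx.2])]; rfl
  have hsub : Set.Icc (sInf A) (sSup A) ⊆ Set.Icc (0:ℝ) 1 :=
    Set.Icc_subset_Icc ha0 hb1
  obtain ⟨ρs, hρsI, hρsmax⟩ := isCompact_Icc.exists_isMaxOn
    ⟨ρ₀, Set.Ioo_subset_Icc_self hρ₀Ioo⟩ (hFcont.mono hsub)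
  rw [isMaxOn_iff] at hρsmax
  have hFρ₀ : 0 < F ρ₀ := hFpos ρ₀ hρ₀A
  have hFρ₀s : F ρ₀ ≤ F ρs := hρsmax ρ₀ (Set.Ioo_subset_Icc_self hρ₀Ioo)
  -- endpoint values are nonpositive
  obtain ⟨hρ₀I, hp₀1, hp₀2⟩ := (hmem ρ₀).1 hρ₀A
  have hFa : F (sInf A) ≤ 0 := by
    have hsecond : c₂ < R₂ (1 - sInf A) := by
      rw [hR2phi (1 - sInf A) (by linarith), lt_div_iff₀ hL0]
      calc c₂ * L < fdmPhi s₂ (1 - ρ₀) := hp₀2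
        _ < fdmPhi s₂ (1 - sInf A) := mono2 (by simp; linarith [hρ₀I.2])
            (by simp; linarith) (by linarith [hρ₀Ioo.1])
    have hfirst : R₁ (sInf A) - c₁ ≤ 0 := by
      rcases eq_or_lt_of_le ha0 with h0 | h0
      · rw [hR1phi (sInf A) ha0, ← h0, fdmPhi_zero]
        simp
        positivity
      · have haI : sInf A ∈ Set.Ioo (0:ℝ) 1 := ⟨h0, lt_of_lt_of_le hab hb1⟩
        have hnotboth : ¬ (c₁ * L < fdmPhi s₁ (sInf A) ∧ c₂ * L < fdmPhi s₂ (1 - sInf A)) := by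
          intro hcontra
          exact hInf_notin ((hmem _).2 ⟨haI, hcontra⟩)
        have h2' : c₂ * L < fdmPhi s₂ (1 - sInf A) := by
          rw [hR2phi (1 - sInf A) (by linarith), lt_div_iff₀ hL0] at hsecond
          exact hsecond
        have h1' : fdmPhi s₁ (sInf A) ≤ c₁ * L := by
          by_contra hcon
          exact hnotboth ⟨lt_of_not_ge hcon, h2'⟩
        rw [hR1phi (sInf A) ha0, sub_nonpos, div_le_iff₀ hL0]
        linarith [mul_comm c₁ L]
    rw [hF]
    exact mul_nonpos_of_nonpos_of_nonneg hfirst (by linarith)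
  have hFb : F (sSup A) ≤ 0 := by
    have hfirst : c₁ < R₁ (sSup A) := by
      rw [hR1phi (sSup A) (by linarith), lt_div_iff₀ hL0]
      calc c₁ * L < fdmPhi s₁ ρ₀ := hp₀1
        _ < fdmPhi s₁ (sSup A) := mono1 hρ₀I.1.le (by simp; linarith) hρ₀Ioo.2
    have hsecond : R₂ (1 - sSup A) - c₂ ≤ 0 := by
      rcases eq_or_lt_of_le hb1 with h1 | h1
      · rw [hR2phi (1 - sSup A) (by linarith), h1]
        simp [fdmPhi_zero]
        positivity
      · have hbI : sSup A ∈ Set.Ioo (0:ℝ) 1 := ⟨lt_of_le_of_lt ha0 hab, h1⟩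
        have hnotboth : ¬ (c₁ * L < fdmPhi s₁ (sSup A) ∧ c₂ * L < fdmPhi s₂ (1 - sSup A)) := by
          intro hcontra
          exact hSup_notin ((hmem _).2 ⟨hbI, hcontra⟩)
        have h1' : c₁ * L < fdmPhi s₁ (sSup A) := by
          rw [hR1phi (sSup A) (by linarith), lt_div_iff₀ hL0] at hfirst
          exact hfirst
        have h2' : fdmPhi s₂ (1 - sSup A) ≤ c₂ * L := by
          by_contra hcon
          exact hnotboth ⟨h1', lt_of_not_ge hcon⟩
        rw [hR2phi (1 - sSup A) (by linarith), sub_nonpos, div_le_iff₀ hL0]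
        linarith [mul_comm c₂ L]
    rw [hF]
    exact mul_nonpos_of_nonneg_of_nonpos (by linarith) hsecond
  have hρsA : ρs ∈ A := by
    rw [hAIoo]
    rcases eq_or_lt_of_le hρsI.1 with h | h
    · exfalso; rw [h] at hFa; linarith
    rcases eq_or_lt_of_le hρsI.2 with h' | h'
    · exfalso; rw [← h'] at hFb; linarith
    exact ⟨h, h'⟩
  have hρsmaxA : ∀ ρ ∈ A, F ρ ≤ F ρs := by
    intro ρ hρ
    exact hρsmax ρ (Set.Ioo_subset_Icc_self (hAIoo ▸ hρ))
  refine ⟨ρs, ⟨hρsA, hρsmaxA⟩, ?_⟩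
  -- uniqueness
  rintro y ⟨hyA, hymax⟩
  by_contra hne
  obtain ⟨z, hzdef⟩ : ∃ t : ℝ, t = (y + ρs) / 2 := ⟨_, rfl⟩
  have hyIoo : y ∈ Set.Ioo (sInf A) (sSup A) := hAIoo ▸ hyA
  have hρsIoo : ρs ∈ Set.Ioo (sInf A) (sSup A) := hAIoo ▸ hρsA
  have hzA : z ∈ A := by
    rw [hAIoo]
    constructor
    · rw [hzdef]; rcases hyIoo with ⟨h1, _⟩; rcases hρsIoo with ⟨h2, _⟩; linarith
    · rw [hzdef]; rcases hyIoo with ⟨_, h1⟩; rcases hρsIoo with ⟨_, h2⟩; linarith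
  -- extract memberships
  obtain ⟨hyI, hy1, hy2⟩ := (hmem y).1 hyA
  obtain ⟨hρsI', hρs1, hρs2⟩ := (hmem ρs).1 hρsA
  obtain ⟨hzI, hz1, hz2⟩ := (hmem z).1 hzA
  -- strict concavity at the midpoint
  have hPmid : (fdmPhi s₁ y + fdmPhi s₁ ρs) / 2 < fdmPhi s₁ z := by
    have := (strictConcaveOn_fdmPhi hs₁).2 (Set.mem_Ici.2 hyI.1.le)
      (Set.mem_Ici.2 hρsI'.1.le) hne one_half_pos one_half_pos (by norm_num)
    simp only [smul_eq_mul] at this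
    have hrw : (1:ℝ)/2 * y + 1/2 * ρs = z := by rw [hzdef]; ring
    rw [hrw] at this
    linarith
  have hQmid : (fdmPhi s₂ (1 - y) + fdmPhi s₂ (1 - ρs)) / 2 < fdmPhi s₂ (1 - z) := by
    have hne' : (1:ℝ) - y ≠ 1 - ρs := by
      intro h; apply hne; linarith
    have := (strictConcaveOn_fdmPhi hs₂).2 (Set.mem_Ici.2 (by linarith [hyI.2] : (0:ℝ) ≤ 1 - y))
      (Set.mem_Ici.2 (by linarith [hρsI'.2] : (0:ℝ) ≤ 1 - ρs)) hne' one_half_pos one_half_pos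
      (by norm_num)
    simp only [smul_eq_mul] at this
    have hrw : (1:ℝ)/2 * (1 - y) + 1/2 * (1 - ρs) = 1 - z := by rw [hzdef]; ring
    rw [hrw] at this
    linarith
  -- convert to the R-scale
  obtain ⟨fy, hfy⟩ : ∃ t : ℝ, t = R₁ y - c₁ := ⟨_, rfl⟩
  obtain ⟨fρ, hfρ⟩ : ∃ t : ℝ, t = R₁ ρs - c₁ := ⟨_, rfl⟩
  obtain ⟨fz, hfz⟩ : ∃ t : ℝ, t = R₁ z - c₁ := ⟨_, rfl⟩
  obtain ⟨gy, hgy⟩ : ∃ t : ℝ, t = R₂ (1 - y) - c₂ := ⟨_, rfl⟩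
  obtain ⟨gρ, hgρ⟩ : ∃ t : ℝ, t = R₂ (1 - ρs) - c₂ := ⟨_, rfl⟩
  obtain ⟨gz, hgz⟩ : ∃ t : ℝ, t = R₂ (1 - z) - c₂ := ⟨_, rfl⟩
  have hfyv : fy = fdmPhi s₁ y / L - c₁ := by rw [hfy, hR1phi y hyI.1.le]
  have hfρv : fρ = fdmPhi s₁ ρs / L - c₁ := by rw [hfρ, hR1phi ρs hρsI'.1.le]
  have hfzv : fz = fdmPhi s₁ z / L - c₁ := by rw [hfz, hR1phi z hzI.1.le]
  have hgyv : gy = fdmPhi s₂ (1 - y) / L - c₂ := by rw [hgy, hR2phi (1-y) (by linarith [hyI.2])]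
  have hgρv : gρ = fdmPhi s₂ (1 - ρs) / L - c₂ := by
    rw [hgρ, hR2phi (1-ρs) (by linarith [hρsI'.2])]
  have hgzv : gz = fdmPhi s₂ (1 - z) / L - c₂ := by rw [hgz, hR2phi (1-z) (by linarith [hzI.2])]
  have hfypos : 0 < fy := by rw [hfyv, sub_pos, lt_div_iff₀ hL0]; exact hy1
  have hfρpos : 0 < fρ := by rw [hfρv, sub_pos, lt_div_iff₀ hL0]; exact hρs1
  have hgypos : 0 < gy := by rw [hgyv, sub_pos, lt_div_iff₀ hL0]; exact hy2
  have hgρpos : 0 < gρ := by rw [hgρv, sub_pos, lt_div_iff₀ hL0]; exact hρs2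
  have hfmid : (fy + fρ) / 2 < fz := by
    rw [hfyv, hfρv, hfzv]
    have h1 : ((fdmPhi s₁ y + fdmPhi s₁ ρs) / 2) / L < fdmPhi s₁ z / L :=
      (div_lt_div_iff_of_pos_right hL0).2 hPmid
    have h2 : (fdmPhi s₁ y / L - c₁ + (fdmPhi s₁ ρs / L - c₁)) / 2
        = ((fdmPhi s₁ y + fdmPhi s₁ ρs) / 2) / L - c₁ := by ring
    rw [h2]
    linarith
  have hgmid : (gy + gρ) / 2 < gz := by
    rw [hgyv, hgρv, hgzv]
    have h1 : ((fdmPhi s₂ (1-y) + fdmPhi s₂ (1-ρs)) / 2) / L < fdmPhi s₂ (1-z) / L :=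
      (div_lt_div_iff_of_pos_right hL0).2 hQmid
    have h2 : (fdmPhi s₂ (1-y) / L - c₂ + (fdmPhi s₂ (1-ρs) / L - c₂)) / 2
        = ((fdmPhi s₂ (1-y) + fdmPhi s₂ (1-ρs)) / 2) / L - c₂ := by ring
    rw [h2]
    linarith
  have hFy : F y = fy * gy := by rw [hF, hfy, hgy]
  have hFρ : F ρs = fρ * gρ := by rw [hF, hfρ, hgρ]
  have hFz : F z = fz * gz := by rw [hF, hfz, hgz]
  have heqm : fy * gy = fρ * gρ := by
    rw [← hFy, ← hFρ]
    exact le_antisymm (hρsmaxA y hyA) (hymax ρs hρsA)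
  have hFzle : fz * gz ≤ fρ * gρ := by rw [← hFz, ← hFρ]; exact hρsmaxA z hzA
  exact fdm_amgm_contra hfypos hfρpos hgypos hgρpos heqm hfmid hgmid hFzle
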